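/- Let A be a commutative unital ℂ-algebra, g a complex simple Lie algebra, λ a dominant integral weight, and W_A(λ) the g⊗A-module generated by w_λ with relations (n⁺⊗A)w_λ = 0, h·w_λ = λ(h)w_λ for h ∈ h, and (x_i⁻)^{λ(h_i)+1} w_λ = 0 for all i. Then the formula (u w_λ)·(h⊗a) := u (h⊗a) w_λ, for u ∈ U(g⊗A), h ∈ h, a ∈ A, gives a well-defined right U(h⊗A)-module structure on W_A(λ) commuting with the left g⊗A-action. -/

import Mathlib

open TensorProduct

/-- The current Lie algebra `g ⊗ A` (realized as `A ⊗[ℂ] g`) is a complex Lie algebra. -/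
noncomputable instance currentLieAlgebra (A : Type*) [CommRing A] [Algebra ℂ A]
    (g : Type*) [LieRing g] [LieAlgebra ℂ g] : LieAlgebra ℂ (A ⊗[ℂ] g) where
  lie_smul t x y := by
    rw [← algebraMap_smul A t y, lie_smul, algebraMap_smul]

/-- The set of defining relations of the global Weyl module `W_A(λ)`, inside the
universal enveloping algebra of `g ⊗ A`: the elements `x ⊗ a` for `x ∈ n⁺`, the
elements `h ⊗ 1 − λ(h)` for `h` in the Cartan subalgebra `H`, and the powers
`(x_i⁻ ⊗ 1)^{λ(h_i)+1}`.  The global Weyl module is the quotient of `U(g ⊗ A)` by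
the left ideal generated by this set. -/
noncomputable def weylRels (A : Type*) [CommRing A] [Algebra ℂ A]
    {g : Type*} [LieRing g] [LieAlgebra ℂ g] (H : LieSubalgebra ℂ g)
    (npos : LieSubalgebra ℂ g) (lam : Module.Dual ℂ H)
    {n : ℕ} (xm : Fin n → g) (m : Fin n → ℕ) :
    Set (UniversalEnvelopingAlgebra ℂ (A ⊗[ℂ] g)) :=
  {u | ∃ x ∈ npos, ∃ a : A, u = UniversalEnvelopingAlgebra.ι ℂ (a ⊗ₜ[ℂ] x)} ∪
  {u | ∃ h : H, u = UniversalEnvelopingAlgebra.ι ℂ ((1 : A) ⊗ₜ[ℂ] (h : g)) -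
        algebraMap ℂ _ (lam h)} ∪
  {u | ∃ i, u = (UniversalEnvelopingAlgebra.ι ℂ ((1 : A) ⊗ₜ[ℂ] xm i)) ^ (m i + 1)}

/-- The left ideal of relations of the global Weyl module `W_A(λ)`. -/
noncomputable def weylIdeal (A : Type*) [CommRing A] [Algebra ℂ A]
    {g : Type*} [LieRing g] [LieAlgebra ℂ g] (H : LieSubalgebra ℂ g)
    (npos : LieSubalgebra ℂ g) (lam : Module.Dual ℂ H)
    {n : ℕ} (xm : Fin n → g) (m : Fin n → ℕ) :
    Submodule (UniversalEnvelopingAlgebra ℂ (A ⊗[ℂ] g))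
      (UniversalEnvelopingAlgebra ℂ (A ⊗[ℂ] g)) :=
  Submodule.span _ (weylRels A H npos lam xm m)


section Aux
variable {R : Type*} [Ring R] [Algebra ℂ R]

lemma aux_pow_comm (f fa z : R) (c : ℂ) (Hfz : f * z = z * f + c • fa)
    (Hff : f * fa = fa * f) :
    ∀ k : ℕ, f ^ (k+1) * z = z * f ^ (k+1) + (((k:ℂ)+1) * c) • (fa * f ^ k) := by
  intro k
  induction k with
  | zero => simpa using Hfz
  | succ k ih =>
    have hcfa : (Commute f fa) := Hff
    have hp : f ^ (k+1) * fa = fa * f ^ (k+1) := (hcfa.pow_left (k+1)).eq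
    calc f ^ (k+2) * z = f * (f ^ (k+1) * z) := by rw [← mul_assoc, ← pow_succ']
      _ = f * (z * f ^ (k+1)) + (((k:ℂ)+1) * c) • (f * (fa * f ^ k)) := by
          rw [ih, mul_add, mul_smul_comm]
      _ = (f * z) * f ^ (k+1) + (((k:ℂ)+1) * c) • (fa * f ^ (k+1)) := by
          rw [← mul_assoc, ← mul_assoc, Hff, mul_assoc fa, ← pow_succ']
      _ = z * f ^ (k+2) + (c • (fa * f ^ (k+1)) + (((k:ℂ)+1) * c) • (fa * f ^ (k+1))) := by
          rw [Hfz, add_mul, smul_mul_assoc, mul_assoc, ← pow_succ', add_assoc]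
      _ = z * f ^ (k+2) + ((((k+1:ℕ):ℂ)+1) * c) • (fa * f ^ (k+1)) := by
          rw [← add_smul]
          congr 2
          push_cast
          ring

/-- Garland-type lemma: membership of `fa * f^m` in a left ideal. -/
lemma aux_garland (I : Submodule R R) (e f h fa : R) (m : ℕ)
    (Hef : e * f = f * e + h)
    (Hfh : f * h = h * f + (2:ℂ) • fa)
    (Hff : f * fa = fa * f)
    (hfm : f ^ (m+1) ∈ I) (he : e ∈ I) :
    fa * f ^ m ∈ I := by
  have hsmul : ∀ (c : ℂ) (x : R), x ∈ I → c • x ∈ I := by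
    intro c x hx
    rw [Algebra.smul_def]
    exact I.smul_mem _ hx
  have hmul : ∀ (r x : R), x ∈ I → r * x ∈ I := fun r x hx => I.smul_mem r hx
  have hcancel : ∀ (c : ℂ) (x : R), c ≠ 0 → c • x ∈ I → x ∈ I := by
    intro c x hc hx
    have h2 := hsmul c⁻¹ _ hx
    rwa [smul_smul, inv_mul_cancel₀ hc, one_smul] at h2
  have hLh : ∀ j : ℕ, f ^ (j+1) * h = h * f ^ (j+1) + (((j:ℂ)+1) * 2) • (fa * f ^ j) :=
    aux_pow_comm f fa h 2 Hfh Hff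
  cases m with
  | zero =>
    have hf1 : f ∈ I := by rwa [pow_one] at hfm
    have hh : h ∈ I := by
      have h1 : e * f - f * e ∈ I := I.sub_mem (hmul e f hf1) (hmul f e he)
      rwa [Hef, add_sub_cancel_left] at h1
    have h2 : (2:ℂ) • fa ∈ I := by
      have h3 : f * h - h * f ∈ I := I.sub_mem (hmul f h hh) (hmul h f hf1)
      rwa [Hfh, add_sub_cancel_left] at h3
    have h4 : fa ∈ I := hcancel 2 fa two_ne_zero h2
    simpa using h4
  | succ k =>
    -- key commutator identity
    have hL2 : ∀ j : ℕ, e * f ^ (j+2) = f ^ (j+2) * e + (((j:ℂ)+2)) • (h * f ^ (j+1))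
        + ((((j:ℂ)+1) * ((j:ℂ)+2))) • (fa * f ^ j) := by
      intro j
      induction j with
      | zero =>
        have main : e * f ^ 2 = f ^ 2 * e + (h * f + ((2:ℂ) • fa + h * f)) := by
          calc e * f ^ 2 = (e * f) * f := by rw [pow_two, ← mul_assoc]
            _ = (f * e) * f + h * f := by rw [Hef, add_mul]
            _ = f * (e * f) + h * f := by rw [mul_assoc]
            _ = f * (f * e + h) + h * f := by rw [Hef]
            _ = f ^ 2 * e + (f * h + h * f) := by
                rw [mul_add, ← mul_assoc, ← pow_two, add_assoc]
            _ = f ^ 2 * e + (h * f + (2:ℂ) • fa + h * f) := by rw [Hfh]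
            _ = f ^ 2 * e + (h * f + ((2:ℂ) • fa + h * f)) := by rw [add_assoc (h*f)]
        show e * f ^ 2 = f ^ 2 * e + _ • (h * f ^ 1) + _ • (fa * f ^ 0)
        rw [main, pow_one, pow_zero, mul_one]
        push_cast
        module
      | succ j ih =>
        have main : e * f ^ (j+3) = f ^ (j+3) * e + (((j:ℂ)+3)) • (h * f ^ (j+2))
            + ((((j:ℂ)+2) * ((j:ℂ)+3))) • (fa * f ^ (j+1)) := by
          calc e * f ^ (j+3) = (e * f ^ (j+2)) * f := by rw [mul_assoc, ← pow_succ]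
            _ = f ^ (j+2) * (e * f) + (((j:ℂ)+2)) • (h * (f ^ (j+1) * f))
                + ((((j:ℂ)+1) * ((j:ℂ)+2))) • (fa * (f ^ j * f)) := by
                rw [ih, add_mul, add_mul, smul_mul_assoc, smul_mul_assoc,
                  mul_assoc, mul_assoc, mul_assoc]
            _ = f ^ (j+3) * e + f ^ (j+2) * h + (((j:ℂ)+2)) • (h * f ^ (j+2))
                + ((((j:ℂ)+1) * ((j:ℂ)+2))) • (fa * f ^ (j+1)) := by
                rw [Hef, mul_add, ← pow_succ, ← pow_succ, ← mul_assoc, ← pow_succ]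
            _ = f ^ (j+3) * e + (h * f ^ (j+2) + ((((j:ℂ)+1)+1) * 2) • (fa * f ^ (j+1)))
                + (((j:ℂ)+2)) • (h * f ^ (j+2))
                + ((((j:ℂ)+1) * ((j:ℂ)+2))) • (fa * f ^ (j+1)) := by
                rw [hLh (j+1)]
                push_cast
                ring_nf
            _ = f ^ (j+3) * e + (((j:ℂ)+3)) • (h * f ^ (j+2))
                + ((((j:ℂ)+2) * ((j:ℂ)+3))) • (fa * f ^ (j+1)) := by
                module
        show e * f ^ (j+3) = f ^ (j+3) * e + _ • (h * f ^ (j+2)) + _ • (fa * f ^ (j+1))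
        rw [main]
        push_cast
        module
    have key := hL2 k
    have hk2 : ((k:ℂ)+2) ≠ 0 := by
      have h0 : ((k:ℂ)+2) = ((k+2 : ℕ) : ℂ) := by push_cast; ring
      rw [h0]
      exact_mod_cast Nat.succ_ne_zero (k+1)
    have hk3 : ((k:ℂ)+3) ≠ 0 := by
      have h0 : ((k:ℂ)+3) = ((k+3 : ℕ) : ℂ) := by push_cast; ring
      rw [h0]
      exact_mod_cast Nat.succ_ne_zero (k+2)
    have hA : e * f ^ (k+2) ∈ I := hmul e _ hfm
    have hB : f ^ (k+2) * e ∈ I := hmul _ e he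
    have hC : (((k:ℂ)+2)) • (h * f ^ (k+1)) + ((((k:ℂ)+1) * ((k:ℂ)+2))) • (fa * f ^ k) ∈ I := by
      have h1 := I.sub_mem hA hB
      rw [key] at h1
      rwa [add_assoc, add_sub_cancel_left] at h1
    have hT : h * f ^ (k+1) + (((k:ℂ)+1)) • (fa * f ^ k) ∈ I := by
      have h1 := hsmul (((k:ℂ)+2)⁻¹) _ hC
      rw [smul_add, smul_smul, smul_smul, inv_mul_cancel₀ hk2, one_smul] at h1
      rwa [show ((k:ℂ)+2)⁻¹*(((k:ℂ)+1)*((k:ℂ)+2)) = (k:ℂ)+1 by field_simp] at h1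
    have hfT : f * (h * f ^ (k+1) + (((k:ℂ)+1)) • (fa * f ^ k)) ∈ I := hmul f _ hT
    have hexp : f * (h * f ^ (k+1) + (((k:ℂ)+1)) • (fa * f ^ k))
        = h * f ^ (k+2) + (((k:ℂ)+3)) • (fa * f ^ (k+1)) := by
      rw [mul_add, mul_smul_comm, ← mul_assoc, Hfh, ← mul_assoc f fa, Hff,
        add_mul, smul_mul_assoc, mul_assoc, ← pow_succ', mul_assoc, ← pow_succ']
      module
    rw [hexp] at hfT
    have hD : (((k:ℂ)+3)) • (fa * f ^ (k+1)) ∈ I := by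
      have h1 := I.sub_mem hfT (hmul h _ hfm)
      rwa [add_comm, add_sub_cancel_right] at h1
    exact hcancel _ _ hk3 hD

end Aux


section LieAux

variable {g : Type*} [LieRing g] [LieAlgebra ℂ g]

/-- Centralizer trick: if `v` commutes with the generators, it commutes with the span. -/
lemma aux_centralizer (v : g) (S : Set g) (h0 : ∀ s ∈ S, ⁅v, s⁆ = 0) :
    ∀ x ∈ LieSubalgebra.lieSpan ℂ g S, ⁅v, x⁆ = 0 := by
  let K : LieSubalgebra ℂ g :=
    { carrier := {x | ⁅v, x⁆ = 0}
      zero_mem' := lie_zero v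
      add_mem' := fun {x y} hx hy => by
        simp only [Set.mem_setOf_eq] at *
        rw [lie_add, hx, hy, add_zero]
      smul_mem' := fun c x hx => by
        simp only [Set.mem_setOf_eq] at *
        rw [lie_smul, hx, smul_zero]
      lie_mem' := fun {x y} hx hy => by
        simp only [Set.mem_setOf_eq] at *
        rw [leibniz_lie, hx, hy, zero_lie, lie_zero, add_zero] }
  intro x hx
  exact (LieSubalgebra.lieSpan_le (K := K)).mpr (fun s hs => h0 s hs) hx

/-- Stability of a lie-span under a diagonalizable bracket action. -/
lemma aux_stable (npos : LieSubalgebra ℂ g) {n : ℕ} (xp : Fin n → g) (h : g)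
    (c : Fin n → ℂ)
    (hgen : npos = LieSubalgebra.lieSpan ℂ g (Set.range xp))
    (hbr : ∀ i, ⁅h, xp i⁆ = c i • xp i) :
    ∀ x ∈ npos, ⁅h, x⁆ ∈ npos := by
  let K : LieSubalgebra ℂ g :=
    { carrier := {x | x ∈ npos ∧ ⁅h, x⁆ ∈ npos}
      zero_mem' := ⟨npos.zero_mem, by rw [lie_zero]; exact npos.zero_mem⟩
      add_mem' := fun {x y} hx hy =>
        ⟨npos.add_mem hx.1 hy.1, by rw [lie_add]; exact npos.add_mem hx.2 hy.2⟩
      smul_mem' := fun t x hx =>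
        ⟨npos.smul_mem t hx.1, by rw [lie_smul]; exact npos.smul_mem t hx.2⟩
      lie_mem' := fun {x y} hx hy =>
        ⟨npos.lie_mem hx.1 hy.1, by
          rw [leibniz_lie]
          exact npos.add_mem (npos.lie_mem hx.2 hy.1) (npos.lie_mem hx.1 hy.2)⟩ }
  intro x hx
  have hK : npos ≤ K := by
    rw [hgen]
    apply LieSubalgebra.lieSpan_le.mpr
    rintro - ⟨i, rfl⟩
    exact ⟨hgen ▸ LieSubalgebra.subset_lieSpan ⟨i, rfl⟩, by
      rw [hbr i]; exact npos.smul_mem _ (hgen ▸ LieSubalgebra.subset_lieSpan ⟨i, rfl⟩)⟩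
  exact (hK hx).2

end LieAux

section Abelian

variable {g : Type*} [LieRing g] [LieAlgebra ℂ g] [LieAlgebra.IsSimple ℂ g]

/-- In the presence of a triangular decomposition, a Cartan subalgebra is abelian. -/
lemma aux_abelian (H npos nneg : LieSubalgebra ℂ g) [H.IsCartanSubalgebra] {n : ℕ}
    (xp xm : Fin n → g) (α : Fin n → Module.Dual ℂ H)
    (hhe : ∀ i (h : H), ⁅(h : g), xp i⁆ = α i h • xp i)
    (hhf : ∀ i (h : H), ⁅(h : g), xm i⁆ = -(α i h • xm i))
    (hgenp : npos = LieSubalgebra.lieSpan ℂ g (Set.range xp))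
    (hgenm : nneg = LieSubalgebra.lieSpan ℂ g (Set.range xm))
    (hdec : nneg.toSubmodule ⊔ H.toSubmodule ⊔ npos.toSubmodule = ⊤) :
    ∀ h₁ h₂ : H, ⁅(h₁ : g), (h₂ : g)⁆ = 0 := by
  set S : Set g := {z | ∃ h₁ h₂ : H, z = ⁅(h₁ : g), (h₂ : g)⁆} with hS
  set V : Submodule ℂ g := Submodule.span ℂ S with hV
  -- generators of V annihilate npos and nneg
  have hgkp : ∀ z ∈ S, ∀ x ∈ npos, ⁅z, x⁆ = 0 := by
    rintro z ⟨h₁, h₂, rfl⟩ x hx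
    rw [hgenp] at hx
    refine aux_centralizer _ _ ?_ x hx
    rintro - ⟨i, rfl⟩
    rw [lie_lie, hhe, hhe, lie_smul, lie_smul, hhe, hhe, smul_smul, smul_smul,
      mul_comm, sub_self]
  have hgkm : ∀ z ∈ S, ∀ x ∈ nneg, ⁅z, x⁆ = 0 := by
    rintro z ⟨h₁, h₂, rfl⟩ x hx
    rw [hgenm] at hx
    refine aux_centralizer _ _ ?_ x hx
    rintro - ⟨i, rfl⟩
    rw [lie_lie, hhf, hhf, lie_neg, lie_neg, lie_smul, lie_smul, hhf, hhf]
    rw [smul_neg, smul_neg, neg_neg, neg_neg, smul_smul, smul_smul, mul_comm, sub_self]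
  -- all of V annihilates npos and nneg
  have hVp : ∀ v ∈ V, ∀ x ∈ npos, ⁅v, x⁆ = 0 := by
    intro v hv
    induction hv using Submodule.span_induction with
    | mem z hz => exact hgkp z hz
    | zero => intro x hx; rw [zero_lie]
    | add a b _ _ ha hb => intro x hx; rw [add_lie, ha x hx, hb x hx, add_zero]
    | smul c a _ ha => intro x hx; rw [smul_lie, ha x hx, smul_zero]
  have hVm : ∀ v ∈ V, ∀ x ∈ nneg, ⁅v, x⁆ = 0 := by
    intro v hv
    induction hv using Submodule.span_induction with
    | mem z hz => exact hgkm z hz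
    | zero => intro x hx; rw [zero_lie]
    | add a b _ _ ha hb => intro x hx; rw [add_lie, ha x hx, hb x hx, add_zero]
    | smul c a _ ha => intro x hx; rw [smul_lie, ha x hx, smul_zero]
  -- V is stable under bracketing with H
  have hVH : ∀ (b : H) (v : g), v ∈ V → ⁅(b : g), v⁆ ∈ V := by
    intro b v hv
    induction hv using Submodule.span_induction with
    | mem z hz =>
      obtain ⟨h₁, h₂, rfl⟩ := hz
      have : ⁅(b : g), ⁅(h₁ : g), (h₂ : g)⁆⁆ = ⁅(b : g), ((⁅h₁, h₂⁆ : H) : g)⁆ := rfl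
      rw [this]
      exact Submodule.subset_span ⟨b, ⁅h₁, h₂⁆, rfl⟩
    | zero => rw [lie_zero]; exact V.zero_mem
    | add a c _ _ ha hc => rw [lie_add]; exact V.add_mem ha hc
    | smul t a _ ha => rw [lie_smul]; exact V.smul_mem t ha
  -- V is an ideal
  let VI : LieIdeal ℂ g :=
    { toSubmodule := V
      lie_mem := by
        intro x v hv
        have hx : x ∈ nneg.toSubmodule ⊔ H.toSubmodule ⊔ npos.toSubmodule := by
          rw [hdec]; trivial
        obtain ⟨p, hp, q, hq, rfl⟩ := Submodule.mem_sup.mp hx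
        obtain ⟨a, ha, b, hb, rfl⟩ := Submodule.mem_sup.mp hp
        have h1 : ⁅a, v⁆ = 0 := by
          rw [← lie_skew, hVm v hv a ha, neg_zero]
        have h2 : ⁅q, v⁆ = 0 := by
          rw [← lie_skew, hVp v hv q hq, neg_zero]
        show ⁅a + b + q, v⁆ ∈ V
        rw [add_lie, add_lie, h1, h2, zero_add, add_zero]
        exact hVH ⟨b, hb⟩ v hv }
  rcases LieAlgebra.IsSimple.eq_bot_or_eq_top VI with hbot | htop
  · intro h₁ h₂
    have hmem : ⁅(h₁ : g), (h₂ : g)⁆ ∈ VI := Submodule.subset_span ⟨h₁, h₂, rfl⟩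
    rw [hbot] at hmem
    exact (LieSubmodule.mem_bot _).mp hmem
  · exfalso
    have hVle : V ≤ H.toSubmodule := by
      apply Submodule.span_le.mpr
      rintro - ⟨h₁, h₂, rfl⟩
      exact (⁅h₁, h₂⁆ : H).2
    have hall : ∀ x : g, x ∈ H := by
      intro x
      have : x ∈ VI := htop ▸ LieSubmodule.mem_top x
      exact hVle this
    have hH : H = ⊤ := by
      apply le_antisymm le_top
      intro x _
      exact hall x
    have hnilH : LieRing.IsNilpotent H := inferInstance
    rw [hH] at hnilH
    haveI hnilg : LieRing.IsNilpotent g :=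
      LieSubalgebra.topEquiv.nilpotent_iff_equiv_nilpotent.mp hnilH
    haveI : Nontrivial g := by
      by_contra hnt
      rw [not_nontrivial_iff_subsingleton] at hnt
      exact LieAlgebra.IsSimple.non_abelian (R := ℂ) (L := g)
        ⟨fun x y => Subsingleton.elim _ _⟩
    have hc : Nontrivial (LieAlgebra.center ℂ g) :=
      LieAlgebra.non_trivial_center_of_isNilpotent (R := ℂ) (L := g)
    rw [LieAlgebra.center_eq_bot ℂ g] at hc
    obtain ⟨x, y, hxy⟩ := hc
    apply hxy
    apply Subtype.ext
    rw [(LieSubmodule.mem_bot _).mp x.2, (LieSubmodule.mem_bot _).mp y.2]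

end Abelian

/-- Well-definedness of the right action of `U(h ⊗ A)` on the global Weyl module
`W_A(λ) = U(g ⊗ A)/I_λ`: for `h` in the Cartan subalgebra and `a ∈ A`, right
multiplication by `ι(h ⊗ a)` preserves the left ideal of relations `I_λ`, hence
`(u w_λ)·(h ⊗ a) := u (h ⊗ a) w_λ` is a well-defined right `U(h ⊗ A)`-module structure
on `W_A(λ)`, which commutes with the left `g ⊗ A`-action since it is induced by right
multiplication. -/
theorem stmt12 (g : Type*) [LieRing g] [LieAlgebra ℂ g]
    [FiniteDimensional ℂ g] [LieAlgebra.IsSimple ℂ g]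
    (A : Type*) [CommRing A] [Algebra ℂ A]
    (H : LieSubalgebra ℂ g) [H.IsCartanSubalgebra]
    (npos nneg : LieSubalgebra ℂ g) (n : ℕ)
    (xp xm : Fin n → g) (hc : Fin n → H)
    (α : Fin n → Module.Dual ℂ H) (hαind : LinearIndependent ℂ α)
    (hxp : ∀ i, xp i ∈ npos) (hxm : ∀ i, xm i ∈ nneg)
    (hef : ∀ i, ⁅xp i, xm i⁆ = (hc i : g))
    (hhe : ∀ i (h : H), ⁅(h : g), xp i⁆ = α i h • xp i)
    (hhf : ∀ i (h : H), ⁅(h : g), xm i⁆ = -(α i h • xm i))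
    (hα2 : ∀ i, α i (hc i) = 2)
    (hgenp : npos = LieSubalgebra.lieSpan ℂ g (Set.range xp))
    (hgenm : nneg = LieSubalgebra.lieSpan ℂ g (Set.range xm))
    (hdec : nneg.toSubmodule ⊔ H.toSubmodule ⊔ npos.toSubmodule = ⊤)
    (lam : Module.Dual ℂ H) (m : Fin n → ℕ) (hm : ∀ i, lam (hc i) = (m i : ℂ)) :
    ∀ (h : H) (a : A) (u : UniversalEnvelopingAlgebra ℂ (A ⊗[ℂ] g)),
      u ∈ weylIdeal A H npos lam xm m →
      u * UniversalEnvelopingAlgebra.ι ℂ (a ⊗ₜ[ℂ] (h : g)) ∈ weylIdeal A H npos lam xm m := by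
  intro h a u hu
  classical
  set I := weylIdeal A H npos lam xm m with hI
  letI := LieRing.ofAssociativeRing (A := UniversalEnvelopingAlgebra ℂ (A ⊗[ℂ] g))
  let iota : (A ⊗[ℂ] g) →ₗ⁅ℂ⁆ UniversalEnvelopingAlgebra ℂ (A ⊗[ℂ] g) :=
    UniversalEnvelopingAlgebra.ι ℂ
  set y : UniversalEnvelopingAlgebra ℂ (A ⊗[ℂ] g) := iota (a ⊗ₜ[ℂ] (h : g)) with hy
  -- basic commutator identity in the enveloping algebra
  have hbr : ∀ v w : A ⊗[ℂ] g, iota v * iota w = iota w * iota v + iota ⁅v, w⁆ := by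
    intro v w
    rw [LieHom.map_lie, Ring.lie_def]
    abel
  -- membership helpers
  have hmul : ∀ (r x : UniversalEnvelopingAlgebra ℂ (A ⊗[ℂ] g)), x ∈ I → r * x ∈ I :=
    fun r x hx => I.smul_mem r hx
  have hsmulC : ∀ (c : ℂ) (x : UniversalEnvelopingAlgebra ℂ (A ⊗[ℂ] g)), x ∈ I → c • x ∈ I := by
    intro c x hx
    rw [Algebra.smul_def]
    exact I.smul_mem _ hx
  -- the three families of generators
  have hgen1 : ∀ (x : g), x ∈ npos → ∀ b : A, iota (b ⊗ₜ[ℂ] x) ∈ I := by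
    intro x hx b
    exact Submodule.subset_span (Or.inl (Or.inl ⟨x, hx, b, rfl⟩))
  have hgen2 : ∀ h' : H, iota ((1:A) ⊗ₜ[ℂ] (h' : g)) - algebraMap ℂ _ (lam h') ∈ I :=
    fun h' => Submodule.subset_span (Or.inl (Or.inr ⟨h', rfl⟩))
  have hgen3 : ∀ i, (iota ((1:A) ⊗ₜ[ℂ] xm i)) ^ (m i + 1) ∈ I :=
    fun i => Submodule.subset_span (Or.inr ⟨i, rfl⟩)
  -- the Cartan subalgebra is abelian
  have habelian : ∀ h₁ h₂ : H, ⁅(h₁ : g), (h₂ : g)⁆ = 0 :=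
    aux_abelian H npos nneg xp xm α hhe hhf hgenp hgenm hdec
  -- npos is stable under bracketing with h
  have hstab : ∀ x ∈ npos, ⁅(h : g), x⁆ ∈ npos :=
    aux_stable npos xp (h : g) (fun i => α i h) hgenp (fun i => hhe i h)
  induction hu using Submodule.span_induction with
  | mem s hs =>
    rcases hs with (⟨x, hx, b, rfl⟩ | ⟨h', rfl⟩) | ⟨i, rfl⟩
    · -- generators of the first kind
      have heq : iota (b ⊗ₜ[ℂ] x) * y
          = y * iota (b ⊗ₜ[ℂ] x) + iota ((b * a) ⊗ₜ[ℂ] ⁅x, (h : g)⁆) := by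
        rw [hy, hbr (b ⊗ₜ[ℂ] x) (a ⊗ₜ[ℂ] (h : g)),
          LieAlgebra.ExtendScalars.bracket_tmul]
      show iota (b ⊗ₜ[ℂ] x) * y ∈ I
      rw [heq]
      refine I.add_mem (hmul y _ (hgen1 x hx b)) ?_
      have hmem : ⁅x, (h : g)⁆ ∈ npos := by
        rw [← lie_skew]
        exact npos.neg_mem (hstab x hx)
      exact hgen1 _ hmem (b * a)
    · -- generators of the second kind
      have hz : iota ((1:A) ⊗ₜ[ℂ] (h' : g)) * y = y * iota ((1:A) ⊗ₜ[ℂ] (h' : g)) := by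
        rw [hy, hbr ((1:A) ⊗ₜ[ℂ] (h' : g)) (a ⊗ₜ[ℂ] (h : g)),
          LieAlgebra.ExtendScalars.bracket_tmul, habelian h' h, TensorProduct.tmul_zero,
          map_zero, add_zero]
      have heq : (iota ((1:A) ⊗ₜ[ℂ] (h' : g)) - algebraMap ℂ _ (lam h')) * y
          = y * (iota ((1:A) ⊗ₜ[ℂ] (h' : g)) - algebraMap ℂ _ (lam h')) := by
        rw [sub_mul, mul_sub, hz, Algebra.commutes]
      show (iota ((1:A) ⊗ₜ[ℂ] (h' : g)) - algebraMap ℂ _ (lam h')) * y ∈ I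
      rw [heq]
      exact hmul y _ (hgen2 h')
    · -- generators of the third kind
      set f : UniversalEnvelopingAlgebra ℂ (A ⊗[ℂ] g) := iota ((1:A) ⊗ₜ[ℂ] xm i) with hf
      set e : UniversalEnvelopingAlgebra ℂ (A ⊗[ℂ] g) := iota (a ⊗ₜ[ℂ] xp i) with he
      set hh : UniversalEnvelopingAlgebra ℂ (A ⊗[ℂ] g) := iota (a ⊗ₜ[ℂ] (hc i : g)) with hhh
      set fa : UniversalEnvelopingAlgebra ℂ (A ⊗[ℂ] g) := iota (a ⊗ₜ[ℂ] xm i) with hfa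
      have Hef : e * f = f * e + hh := by
        rw [he, hf, hhh, hbr, LieAlgebra.ExtendScalars.bracket_tmul, mul_one, hef i]
      have Hfh : f * hh = hh * f + (2:ℂ) • fa := by
        rw [hf, hhh, hfa, hbr, LieAlgebra.ExtendScalars.bracket_tmul, one_mul]
        congr 1
        have hx : ⁅xm i, (hc i : g)⁆ = (2:ℂ) • xm i := by
          rw [← lie_skew, hhf i (hc i), neg_neg, hα2 i]
        rw [hx, TensorProduct.tmul_smul, map_smul]
      have Hff : f * fa = fa * f := by
        rw [hf, hfa, hbr, LieAlgebra.ExtendScalars.bracket_tmul, lie_self,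
          TensorProduct.tmul_zero, map_zero, add_zero]
      have hgar : fa * f ^ (m i) ∈ I :=
        aux_garland I e f hh fa (m i) Hef Hfh Hff (hgen3 i) (hgen1 (xp i) (hxp i) a)
      have Hfy : f * y = y * f + (α i h) • fa := by
        rw [hf, hy, hfa, hbr, LieAlgebra.ExtendScalars.bracket_tmul, one_mul]
        congr 1
        have hx : ⁅xm i, (h : g)⁆ = (α i h) • xm i := by
          rw [← lie_skew, hhf i h, neg_neg]
        rw [hx, TensorProduct.tmul_smul, map_smul]
      have hpow := aux_pow_comm f fa y (α i h) Hfy Hff (m i)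
      show f ^ (m i + 1) * y ∈ I
      rw [hpow]
      exact I.add_mem (hmul y _ (hgen3 i)) (hsmulC _ _ hgar)
  | zero => rw [zero_mul]; exact I.zero_mem
  | add u v _ _ hu' hv' =>
    rw [add_mul]
    exact I.add_mem hu' hv'
  | smul r u _ hu' =>
    rw [smul_eq_mul, mul_assoc]
    exact hmul r _ hu'
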